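/- Let T(α,β) = Л(α) + Л(β) + Л(π − α − β), which is the hyperbolic volume of the ideal tetrahedron with dihedral angles α, β, and π − α − β. Then T is strictly concave on the open set {(α,β) ∈ ℝ² : α > 0, β > 0, α + β < π} and continuous on its closure {(α,β) ∈ ℝ² : α ≥ 0, β ≥ 0, α + β ≤ π}. -/

import Mathlib

open Real

/-- The Lobachevsky function `Л(θ) = −∫₀^θ log |2 sin t| dt`. -/
noncomputable def lobachevsky (θ : ℝ) : ℝ := -∫ t in (0 : ℝ)..θ, Real.log |2 * Real.sin t|

/-- The hyperbolic volume of the ideal tetrahedron with dihedral angles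
`α`, `β` and `π − α − β`. -/
noncomputable def idealTetrahedronVolume (p : ℝ × ℝ) : ℝ :=
  lobachevsky p.1 + lobachevsky p.2 + lobachevsky (Real.pi - p.1 - p.2)

open MeasureTheory Set intervalIntegral

lemma integrableOn_log_Ioc01 : IntegrableOn Real.log (Ioc 0 1) volume := by
  have h : IntegrableOn (fun x : ℝ => -Real.log x) (Ioc (0:ℝ) 1) volume := by
    apply intervalIntegral.integrableOn_deriv_of_nonneg
      (g := fun x : ℝ => x - x * Real.log x)
    · exact (continuous_id.sub Real.continuous_mul_log).continuousOn
    · intro x hx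
      have h1 : HasDerivAt (fun x : ℝ => x * Real.log x) (Real.log x + 1) x := by
        simpa using (Real.hasDerivAt_mul_log (ne_of_gt hx.1))
      exact ((hasDerivAt_id x).sub h1).congr_deriv (by show _ = -Real.log x; ring)
    · intro x hx
      simp only [neg_nonneg]
      exact Real.log_nonpos hx.1.le hx.2.le
  have h2 := h.neg
  simp only [Pi.neg_def, neg_neg] at h2
  exact h2

lemma integrableOn_logsin_half :
    IntegrableOn (fun t => Real.log (Real.sin t)) (Ioc 0 (π/2)) volume := by
  have hmeas : AEStronglyMeasurable (fun t => Real.log (Real.sin t))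
      (volume.restrict (Ioc 0 (π/2))) :=
    (Real.measurable_log.comp Real.measurable_sin).aestronglyMeasurable
  have hbound : IntegrableOn (fun t : ℝ => |Real.log t| + Real.log π) (Ioc 0 (π/2)) volume := by
    have h1 : IntegrableOn Real.log (Ioc 0 (π/2)) volume := by
      have hsplit : Ioc (0:ℝ) 1 ∪ Ioc 1 (π/2) = Ioc 0 (π/2) :=
        Ioc_union_Ioc_eq_Ioc zero_le_one (by linarith [pi_gt_three])
      rw [← hsplit]
      refine integrableOn_log_Ioc01.union ?_
      exact (Real.continuousOn_log.mono (fun x hx => by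
        simp only [mem_compl_iff, mem_singleton_iff]
        exact ne_of_gt (lt_of_lt_of_le zero_lt_one hx.1))).integrableOn_compact isCompact_Icc
        |>.mono_set Ioc_subset_Icc_self
    exact h1.abs.add (integrableOn_const measure_Ioc_lt_top.ne)
  refine Integrable.mono hbound hmeas ?_
  refine (ae_restrict_iff' measurableSet_Ioc).2 (ae_of_all _ ?_)
  intro t ht
  have h0 : 0 < Real.sin t := Real.sin_pos_of_pos_of_lt_pi ht.1 (by linarith [ht.2, pi_pos])
  have hlow : 2 / π * t ≤ Real.sin t := Real.mul_le_sin ht.1.le ht.2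
  have hup : Real.sin t ≤ 1 := Real.sin_le_one t
  have hlog_le : Real.log (Real.sin t) ≤ 0 := Real.log_nonpos h0.le hup
  have hlog_ge : Real.log t - Real.log π ≤ Real.log (Real.sin t) := by
    have h2 : Real.log (2 / π * t) ≤ Real.log (Real.sin t) :=
      Real.log_le_log (mul_pos (by positivity) ht.1) hlow
    have h3 : Real.log (2 / π * t) = Real.log 2 - Real.log π + Real.log t := by
      rw [Real.log_mul (by positivity) (ne_of_gt ht.1), Real.log_div (by norm_num) pi_pos.ne']
      try ring
    have h4 : (0:ℝ) ≤ Real.log 2 := Real.log_nonneg one_le_two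
    linarith
  rw [Real.norm_eq_abs, Real.norm_eq_abs, abs_of_nonpos hlog_le]
  have hπ : 0 < Real.log π := Real.log_pos (by linarith [pi_gt_three])
  have : -Real.log t ≤ |Real.log t| := neg_le_abs _
  have habs : 0 ≤ |Real.log t| + Real.log π := by positivity
  rw [abs_of_nonneg habs]
  linarith

lemma measurable_F : Measurable (fun t => Real.log |2 * Real.sin t|) :=
  Real.measurable_log.comp ((Real.measurable_sin.const_mul 2).abs)

lemma II_F_half : IntervalIntegrable (fun t => Real.log |2 * Real.sin t|) volume 0 (π/2) := by
  rw [intervalIntegrable_iff_integrableOn_Ioc_of_le (by positivity)]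
  have : IntegrableOn (fun t => Real.log 2 + Real.log (Real.sin t)) (Ioc 0 (π/2)) volume :=
    (integrableOn_const measure_Ioc_lt_top.ne).add integrableOn_logsin_half
  refine this.congr_fun ?_ measurableSet_Ioc
  intro t ht
  have h0 : 0 < Real.sin t := Real.sin_pos_of_pos_of_lt_pi ht.1 (by linarith [ht.2, pi_pos])
  show Real.log 2 + Real.log (Real.sin t) = Real.log |2 * Real.sin t|
  rw [abs_of_pos (by linarith), Real.log_mul (by norm_num) h0.ne']

lemma II_F_pi : IntervalIntegrable (fun t => Real.log |2 * Real.sin t|) volume 0 π := by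
  refine II_F_half.trans ?_
  have h := II_F_half.comp_sub_left π
  have he : (fun x => Real.log |2 * Real.sin (π - x)|) = fun t => Real.log |2 * Real.sin t| := by
    funext x; rw [Real.sin_pi_sub]
  rw [he] at h
  have h2 : π - π/2 = π/2 := by ring
  rw [h2, sub_zero] at h
  exact h.symm

lemma II_F (a b : ℝ) (ha : a ∈ Icc (0:ℝ) π) (hb : b ∈ Icc (0:ℝ) π) :
    IntervalIntegrable (fun t => Real.log |2 * Real.sin t|) volume a b := by
  have h := (intervalIntegrable_iff_integrableOn_Icc_of_le pi_pos.le).1 II_F_pi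
  refine (h.mono_set ?_).intervalIntegrable
  have : uIcc a b ⊆ Icc 0 π := by
    rw [← uIcc_of_le pi_pos.le, uIcc_subset_uIcc_iff_mem, uIcc_of_le pi_pos.le]
    exact ⟨ha, hb⟩
  exact this

lemma lob_hasDerivAt {θ : ℝ} (h1 : 0 < θ) (h2 : θ < π) :
    HasDerivAt lobachevsky (-Real.log (2 * Real.sin θ)) θ := by
  have hsin : 0 < Real.sin θ := Real.sin_pos_of_pos_of_lt_pi h1 h2
  have hint : IntervalIntegrable (fun t => Real.log |2 * Real.sin t|) volume 0 θ :=
    II_F 0 θ (by simp [pi_pos.le]) ⟨h1.le, h2.le⟩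
  have hmeas : StronglyMeasurableAtFilter (fun t => Real.log |2 * Real.sin t|) (nhds θ) volume :=
    ⟨univ, Filter.univ_mem, measurable_F.aestronglyMeasurable.restrict⟩
  have hcont : ContinuousAt (fun t => Real.log |2 * Real.sin t|) θ := by
    have : (2 * Real.sin θ) ≠ 0 := by positivity
    exact (Real.continuousAt_log (by simpa using this)).comp
      ((continuous_const.mul Real.continuous_sin).abs.continuousAt)
  have h := (intervalIntegral.integral_hasDerivAt_right hint hmeas hcont).neg
  have he : Real.log |2 * Real.sin θ| = Real.log (2 * Real.sin θ) := by
    rw [abs_of_pos (by linarith)]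
  rw [he] at h
  exact h

lemma lob_continuousOn : ContinuousOn lobachevsky (Icc 0 π) := by
  have h := (intervalIntegral.continuousOn_primitive_interval
    (a := (0:ℝ)) (b := π) (μ := volume) (f := fun t => Real.log |2 * Real.sin t|) ?_).neg
  · rwa [uIcc_of_le pi_pos.le] at h
  · rw [uIcc_of_le pi_pos.le]
    exact (intervalIntegrable_iff_integrableOn_Icc_of_le pi_pos.le).1 II_F_pi

lemma Q_pos {A B C u v : ℝ} (hA1 : 0 < A) (hA2 : A < π) (hB1 : 0 < B) (hB2 : B < π)
    (hC1 : 0 < C) (hC2 : C < π) (hC : C = π - A - B) (huv : u ≠ 0 ∨ v ≠ 0) :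
    0 < u^2 * (Real.cos A / Real.sin A) + v^2 * (Real.cos B / Real.sin B)
      + (u+v)^2 * (Real.cos C / Real.sin C) := by
  have sa : 0 < Real.sin A := Real.sin_pos_of_pos_of_lt_pi hA1 hA2
  have sb : 0 < Real.sin B := Real.sin_pos_of_pos_of_lt_pi hB1 hB2
  have sc : 0 < Real.sin C := Real.sin_pos_of_pos_of_lt_pi hC1 hC2
  set a' := Real.cos A / Real.sin A with ha'
  set b' := Real.cos B / Real.sin B with hb'
  set c' := Real.cos C / Real.sin C with hc'
  have hsc : Real.sin C = Real.sin A * Real.cos B + Real.cos A * Real.sin B := by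
    rw [hC, show π - A - B = π - (A+B) by ring, Real.sin_pi_sub, Real.sin_add]
  have hcc : Real.cos C = Real.sin A * Real.sin B - Real.cos A * Real.cos B := by
    rw [hC, show π - A - B = π - (A+B) by ring, Real.cos_pi_sub, Real.cos_add]; ring
  have hid : a' * b' + b' * c' + c' * a' = 1 := by
    rw [ha', hb', hc']
    field_simp
    rw [hsc, hcc]; ring
  have hk1 : 0 < a' + c' := by
    have : a' + c' = Real.sin B / (Real.sin A * Real.sin C) := by
      rw [ha', hc']; field_simp; rw [hsc, hcc]
      linear_combination Real.sin B * Real.sin_sq_add_cos_sq A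
    rw [this]; positivity
  have hk2 : 0 < b' + c' := by
    have : b' + c' = Real.sin A / (Real.sin B * Real.sin C) := by
      rw [hb', hc']; field_simp; rw [hsc, hcc]
      linear_combination Real.sin A * Real.sin_sq_add_cos_sq B
    rw [this]; positivity
  have hQ : u^2 * a' + v^2 * b' + (u+v)^2 * c'
      = (a' + c') * u^2 + 2 * c' * u * v + (b' + c') * v^2 := by ring
  rw [hQ]
  have hdet : (a' + c') * (b' + c') = 1 + c'^2 := by linear_combination hid
  rcases huv with hu | hv
  · nlinarith [sq_nonneg ((b'+c')*v + c'*u), sq_pos_of_ne_zero hu, hdet, mul_pos hk1 hk2]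
  · nlinarith [sq_nonneg ((a'+c')*u + c'*v), sq_pos_of_ne_zero hv, hdet, mul_pos hk1 hk2]

lemma seg_strictConcaveOn (x1 x2 u v : ℝ)
    (hmem : ∀ s ∈ Icc (0:ℝ) 1,
      0 < x1 + s*u ∧ 0 < x2 + s*v ∧ (x1 + s*u) + (x2 + s*v) < π)
    (huv : u ≠ 0 ∨ v ≠ 0) :
    StrictConcaveOn ℝ (Icc (0:ℝ) 1)
      (fun s => idealTetrahedronVolume (x1 + s*u, x2 + s*v)) := by
  set A : ℝ → ℝ := fun s => x1 + s*u with hA_def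
  set B : ℝ → ℝ := fun s => x2 + s*v with hB_def
  set C : ℝ → ℝ := fun s => π - A s - B s with hC_def
  set G1 : ℝ → ℝ := fun s => -Real.log (2 * Real.sin (A s)) * u
      + -Real.log (2 * Real.sin (B s)) * v + -Real.log (2 * Real.sin (C s)) * (-(u+v)) with hG1_def
  have hA : ∀ s : ℝ, HasDerivAt A u s := by
    intro s
    exact (((hasDerivAt_id s).mul_const u).const_add x1).congr_deriv (one_mul u)
  have hB : ∀ s : ℝ, HasDerivAt B v s := by
    intro s
    exact (((hasDerivAt_id s).mul_const v).const_add x2).congr_deriv (one_mul v)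
  have hC : ∀ s : ℝ, HasDerivAt C (-(u+v)) s := by
    intro s
    have := ((hA s).add (hB s)).const_sub π
    simpa [hC_def, sub_sub] using this
  have hrange : ∀ s ∈ Icc (0:ℝ) 1, (0 < A s ∧ A s < π) ∧ (0 < B s ∧ B s < π)
      ∧ (0 < C s ∧ C s < π) := by
    intro s hs
    obtain ⟨h1, h2, h3⟩ := hmem s hs
    simp only [hA_def, hB_def, hC_def]
    refine ⟨⟨h1, by linarith⟩, ⟨h2, by linarith⟩, ⟨by linarith, by linarith⟩⟩
  have hg1 : ∀ s ∈ Icc (0:ℝ) 1,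
      HasDerivAt (fun s => idealTetrahedronVolume (x1 + s*u, x2 + s*v)) (G1 s) s := by
    intro s hs
    obtain ⟨⟨hA1, hA2⟩, ⟨hB1, hB2⟩, ⟨hC1, hC2⟩⟩ := hrange s hs
    have lA : HasDerivAt (fun s => lobachevsky (A s)) (-Real.log (2 * Real.sin (A s)) * u) s :=
      (lob_hasDerivAt hA1 hA2).comp s (hA s)
    have lB : HasDerivAt (fun s => lobachevsky (B s)) (-Real.log (2 * Real.sin (B s)) * v) s :=
      (lob_hasDerivAt hB1 hB2).comp s (hB s)
    have lC : HasDerivAt (fun s => lobachevsky (C s))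
        (-Real.log (2 * Real.sin (C s)) * (-(u+v))) s :=
      (lob_hasDerivAt hC1 hC2).comp s (hC s)
    have := (lA.add lB).add lC
    exact this
  refine strictConcaveOn_of_deriv2_neg (convex_Icc 0 1)
    (fun s hs => (hg1 s hs).continuousAt.continuousWithinAt) ?_
  intro s hs
  rw [interior_Icc] at hs
  obtain ⟨⟨hA1, hA2⟩, ⟨hB1, hB2⟩, ⟨hC1, hC2⟩⟩ := hrange s (Ioo_subset_Icc_self hs)
  have sA : Real.sin (A s) ≠ 0 := (Real.sin_pos_of_pos_of_lt_pi hA1 hA2).ne'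
  have sB : Real.sin (B s) ≠ 0 := (Real.sin_pos_of_pos_of_lt_pi hB1 hB2).ne'
  have sC : Real.sin (C s) ≠ 0 := (Real.sin_pos_of_pos_of_lt_pi hC1 hC2).ne'
  -- derivative of G1
  have h2A : HasDerivAt (fun s => 2 * Real.sin (A s)) (2 * (Real.cos (A s) * u)) s :=
    ((Real.hasDerivAt_sin (A s)).comp s (hA s)).const_mul 2
  have h2B : HasDerivAt (fun s => 2 * Real.sin (B s)) (2 * (Real.cos (B s) * v)) s :=
    ((Real.hasDerivAt_sin (B s)).comp s (hB s)).const_mul 2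
  have h2C : HasDerivAt (fun s => 2 * Real.sin (C s)) (2 * (Real.cos (C s) * (-(u+v)))) s :=
    ((Real.hasDerivAt_sin (C s)).comp s (hC s)).const_mul 2
  have hlogA := (h2A.log (by simpa using mul_ne_zero (two_ne_zero) sA)).neg.mul_const u
  have hlogB := (h2B.log (by simpa using mul_ne_zero (two_ne_zero) sB)).neg.mul_const v
  have hlogC := (h2C.log (by simpa using mul_ne_zero (two_ne_zero) sC)).neg.mul_const (-(u+v))
  have hG2 : HasDerivAt G1
      (-(2 * (Real.cos (A s) * u) / (2 * Real.sin (A s))) * u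
        + -(2 * (Real.cos (B s) * v) / (2 * Real.sin (B s))) * v
        + -(2 * (Real.cos (C s) * (-(u+v))) / (2 * Real.sin (C s))) * (-(u+v))) s :=
    (hlogA.add hlogB).add hlogC
  have hev : deriv (fun s => idealTetrahedronVolume (x1 + s*u, x2 + s*v)) =ᶠ[nhds s] G1 := by
    filter_upwards [Ioo_mem_nhds hs.1 hs.2] with t ht
    exact (hg1 t (Ioo_subset_Icc_self ht)).deriv
  have hkey : deriv^[2] (fun s => idealTetrahedronVolume (x1 + s*u, x2 + s*v)) s
      = -(u^2 * (Real.cos (A s) / Real.sin (A s)) + v^2 * (Real.cos (B s) / Real.sin (B s))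
        + (u+v)^2 * (Real.cos (C s) / Real.sin (C s))) := by
    simp only [Function.iterate_succ, Function.iterate_zero, Function.comp_apply, id_eq]
    rw [hev.deriv_eq, hG2.deriv]
    field_simp
    ring
  rw [hkey, neg_lt, neg_zero]
  exact Q_pos hA1 hA2 hB1 hB2 hC1 hC2 (by simp [hC_def, hA_def, hB_def]) huv

lemma convex_S : Convex ℝ {p : ℝ × ℝ | 0 < p.1 ∧ 0 < p.2 ∧ p.1 + p.2 < π} := by
  have h1 : Convex ℝ {p : ℝ × ℝ | 0 < p.1} :=
    convex_halfSpace_gt ⟨fun a b => rfl, fun c a => rfl⟩ 0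
  have h2 : Convex ℝ {p : ℝ × ℝ | 0 < p.2} :=
    convex_halfSpace_gt ⟨fun a b => rfl, fun c a => rfl⟩ 0
  have h3 : Convex ℝ {p : ℝ × ℝ | p.1 + p.2 < π} :=
    convex_halfSpace_lt ⟨fun a b => add_add_add_comm a.1 b.1 a.2 b.2,
      fun c a => (mul_add c a.1 a.2).symm⟩ π
  have : {p : ℝ × ℝ | 0 < p.1 ∧ 0 < p.2 ∧ p.1 + p.2 < π}
      = {p : ℝ × ℝ | 0 < p.1} ∩ ({p : ℝ × ℝ | 0 < p.2} ∩ {p : ℝ × ℝ | p.1 + p.2 < π}) := by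
    ext p; simp [and_assoc]
  rw [this]
  exact h1.inter (h2.inter h3)


/-- The ideal tetrahedron volume `T(α,β) = Л(α) + Л(β) + Л(π−α−β)` is
strictly concave on `{(α,β) : α > 0, β > 0, α + β < π}` and continuous on the closure
`{(α,β) : α ≥ 0, β ≥ 0, α + β ≤ π}`. -/
theorem idealTetrahedronVolume_strictConcaveOn_and_continuousOn :
    StrictConcaveOn ℝ {p : ℝ × ℝ | 0 < p.1 ∧ 0 < p.2 ∧ p.1 + p.2 < Real.pi}
      idealTetrahedronVolume ∧
    ContinuousOn idealTetrahedronVolume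
      {p : ℝ × ℝ | 0 ≤ p.1 ∧ 0 ≤ p.2 ∧ p.1 + p.2 ≤ Real.pi} := by
  constructor
  · refine ⟨convex_S, ?_⟩
    intro x hx y hy hne a b ha hb hab
    set u := y.1 - x.1 with hu_def
    set v := y.2 - x.2 with hv_def
    have huv : u ≠ 0 ∨ v ≠ 0 := by
      by_contra h
      push_neg at h
      exact hne (Prod.ext (by have := h.1; simp only [hu_def] at this; linarith)
        (by have := h.2; simp only [hv_def] at this; linarith)).symm
    have hmem : ∀ s ∈ Icc (0:ℝ) 1,
        0 < x.1 + s*u ∧ 0 < x.2 + s*v ∧ (x.1 + s*u) + (x.2 + s*v) < π := by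
      intro s hs
      have h := convex_S hx hy (by linarith [hs.2] : (0:ℝ) ≤ 1 - s) hs.1 (by ring)
      have he : ((1-s) • x + s • y : ℝ × ℝ) = (x.1 + s*u, x.2 + s*v) := by
        ext
        · simp only [Prod.fst_add, Prod.smul_fst, smul_eq_mul, hu_def]; ring
        · simp only [Prod.snd_add, Prod.smul_snd, smul_eq_mul, hv_def]; ring
      rw [he] at h
      exact ⟨h.1, h.2.1, h.2.2⟩
    have hsc := seg_strictConcaveOn x.1 x.2 u v hmem huv
    have key := hsc.2 (⟨le_refl 0, zero_le_one⟩ : (0:ℝ) ∈ Icc (0:ℝ) 1)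
      (⟨zero_le_one, le_refl 1⟩ : (1:ℝ) ∈ Icc (0:ℝ) 1) (by norm_num) ha hb hab
    have e0 : ((x.1 + 0*u, x.2 + 0*v) : ℝ × ℝ) = x := by ext <;> simp
    have e1 : ((x.1 + 1*u, x.2 + 1*v) : ℝ × ℝ) = y := by
      ext <;> simp [hu_def, hv_def]
    have eb : a • (0:ℝ) + b • (1:ℝ) = b := by simp
    have e2 : ((x.1 + b*u, x.2 + b*v) : ℝ × ℝ) = a • x + b • y := by
      have ha' : a = 1 - b := by linarith
      ext
      · show x.1 + b*u = a * x.1 + b * y.1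
        rw [ha', hu_def]; ring
      · show x.2 + b*v = a * x.2 + b * y.2
        rw [ha', hv_def]; ring
    rw [eb] at key
    have key' : a • idealTetrahedronVolume (x.1 + 0*u, x.2 + 0*v)
        + b • idealTetrahedronVolume (x.1 + 1*u, x.2 + 1*v)
        < idealTetrahedronVolume (x.1 + b*u, x.2 + b*v) := key
    rw [e0, e1, e2] at key'
    exact key'
  · have hl : ContinuousOn lobachevsky (Icc 0 π) := lob_continuousOn
    unfold idealTetrahedronVolume
    refine ContinuousOn.add (ContinuousOn.add ?_ ?_) ?_
    · exact hl.comp continuous_fst.continuousOn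
        (fun p hp => ⟨hp.1, by linarith [hp.2.1, hp.2.2]⟩)
    · exact hl.comp continuous_snd.continuousOn
        (fun p hp => ⟨hp.2.1, by linarith [hp.1, hp.2.2]⟩)
    · exact hl.comp ((continuous_const.sub continuous_fst).sub continuous_snd).continuousOn
        (fun p hp => ⟨by linarith [hp.2.2], by linarith [hp.1, hp.2.1]⟩)
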